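/- Let B be a finite group and consider the wreath product W = B ≀ A₅ with respect to the natural action of A₅ on {1,...,5}. Let K = {f : {1,...,5} → B | f(1)f(2)f(3)f(4)f(5) ∈ [B,B]}. Then K is a normal subgroup of W, the subgroup K ⋊ A₅ of W is perfect, and K has B as a quotient group. -/

import Mathlib

open SemidirectProduct

variable (B : Type*) [Group B]

/-- The action of `A₅` on `Fin 5 → B` permuting coordinates, as automorphisms. -/
def a5Aut : ↥(alternatingGroup (Fin 5)) →* MulAut (Fin 5 → B) :=
  mulAutArrow.comp (alternatingGroup (Fin 5)).subtype

/-- The wreath product `W = B ≀ A₅ = B⁵ ⋊ A₅` with respect to the natural action of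
`A₅` on `{1,…,5}`. -/
def WreathA5 := (Fin 5 → B) ⋊[a5Aut B] ↥(alternatingGroup (Fin 5))

instance : Group (WreathA5 B) :=
  inferInstanceAs (Group ((Fin 5 → B) ⋊[a5Aut B] ↥(alternatingGroup (Fin 5))))

/-- The homomorphism `B⁵ → B/[B,B]` multiplying the (abelianized) coordinates. -/
def prodAb : (Fin 5 → B) →* Abelianization B :=
  ∏ i : Fin 5, Abelianization.of.comp (Pi.evalMonoidHom (fun _ : Fin 5 => B) i)

/-- The homomorphism `W → B/[B,B]`, `(f, σ) ↦ f(1)f(2)f(3)f(4)f(5) mod [B,B]`. -/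
def thetaW : WreathA5 B →* Abelianization B :=
  SemidirectProduct.lift (prodAb B) 1 (by
    intro g
    ext n
    simp only [MonoidHom.comp_apply, MulEquiv.coe_toMonoidHom, MonoidHom.one_apply, map_one,
      MulAut.one_apply, a5Aut, prodAb, MonoidHom.finset_prod_apply, Pi.evalMonoidHom_apply,
      mulAutArrow_apply_apply]
    exact Equiv.prod_comp _ (fun i => Abelianization.of (n i)))

/-- `K = {f : {1,…,5} → B | f(1)f(2)f(3)f(4)f(5) ∈ [B,B]}`, as a subgroup of
`W = B ≀ A₅`: the intersection of the base group with the kernel of `thetaW`. -/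
def Ksub : Subgroup (WreathA5 B) :=
  (rightHom : WreathA5 B →* ↥(alternatingGroup (Fin 5))).ker ⊓ (thetaW B).ker

open scoped commutatorElement

section Aux
variable {B}

lemma prodAb_apply (f : Fin 5 → B) : prodAb B f = ∏ i, Abelianization.of (f i) := by
  simp [prodAb, MonoidHom.finset_prod_apply]

lemma prodAb_eq (f : Fin 5 → B) : prodAb B f = Abelianization.of ((List.ofFn f).prod) := by
  rw [prodAb_apply, map_list_prod, List.map_ofFn, List.prod_ofFn]; rfl

lemma thetaW_inl (f : Fin 5 → B) : thetaW B (inl f) = prodAb B f :=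
  lift_inl _ _ _ _

lemma thetaW_inr (σ : ↥(alternatingGroup (Fin 5))) : thetaW B (inr σ) = 1 :=
  lift_inr _ _ _ _

lemma thetaW_eq (w : WreathA5 B) : thetaW B w = prodAb B w.left := by
  calc thetaW B w = thetaW B (inl w.left * inr w.right) := (congrArg (thetaW B) (inl_left_mul_inr_right w)).symm
  _ = prodAb B w.left := by rw [show thetaW B (inl w.left * inr w.right) = thetaW B (inl w.left) * thetaW B (inr w.right) from map_mul _ _ _, thetaW_inl, thetaW_inr, mul_one]

lemma prodAb_mulSingle (i : Fin 5) (b : B) :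
    prodAb B (Pi.mulSingle i b) = Abelianization.of b := by
  rw [prodAb_apply, Finset.prod_eq_single i]
  · rw [Pi.mulSingle_eq_same]
  · intro k _ hk; rw [Pi.mulSingle_eq_of_ne hk, map_one]
  · simp

lemma mem_Ksub (w : WreathA5 B) :
    w ∈ Ksub B ↔ (w.right = 1 ∧ (List.ofFn w.left).prod ∈ commutator B) := by
  rw [show w ∈ Ksub B ↔ right w = 1 ∧ thetaW B w = 1 from Iff.rfl,
    thetaW_eq, prodAb_eq]
  exact and_congr Iff.rfl (QuotientGroup.eq_one_iff _)

lemma a5Aut_apply (σ : ↥(alternatingGroup (Fin 5))) (f : Fin 5 → B) (x : Fin 5) :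
    a5Aut B σ f x = f ((σ : Equiv.Perm (Fin 5))⁻¹ x) := by
  simp only [a5Aut, MonoidHom.comp_apply, Subgroup.coe_subtype, mulAutArrow_apply_apply]
  rfl


lemma a5Aut_mulSingle (s : ↥(alternatingGroup (Fin 5))) (i : Fin 5) (b : B) :
    a5Aut B s (Pi.mulSingle i b) = Pi.mulSingle ((s : Equiv.Perm (Fin 5)) i) b := by
  funext x
  rw [a5Aut_apply]
  rcases eq_or_ne x ((s : Equiv.Perm (Fin 5)) i) with rfl | h
  · rw [← Equiv.Perm.mul_apply, inv_mul_cancel, Equiv.Perm.one_apply, Pi.mulSingle_eq_same, Pi.mulSingle_eq_same]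
  · rw [Pi.mulSingle_eq_of_ne h, Pi.mulSingle_eq_of_ne]
    intro hc
    exact h (by rw [← hc, ← Equiv.Perm.mul_apply, mul_inv_cancel, Equiv.Perm.one_apply])

/-- The elementary element: `b` in coordinate `i`, `b⁻¹` in coordinate `j`. -/
def Ee (i j : Fin 5) (b : B) : Fin 5 → B := Pi.mulSingle i b * (Pi.mulSingle j b)⁻¹

lemma inl_Ee_mem_ker (i j : Fin 5) (b : B) : inl (Ee i j b) ∈ (thetaW B).ker := by
  show thetaW B (inl (Ee i j b)) = 1
  rw [thetaW_inl, Ee, map_mul, map_inv, prodAb_mulSingle, prodAb_mulSingle, mul_inv_cancel]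

lemma inr_mem_ker (σ : ↥(alternatingGroup (Fin 5))) : inr σ ∈ (thetaW B).ker := by
  show thetaW B (inr σ) = 1
  exact thetaW_inr σ

lemma commutator_A5 : commutator (↥(alternatingGroup (Fin 5))) = ⊤ := by
  rcases (Subgroup.commutator_normal (⊤ : Subgroup ↥(alternatingGroup (Fin 5)))
      ⊤).eq_bot_or_eq_top with h | h
  · exfalso
    have ha : (Equiv.swap 0 1 * Equiv.swap 2 3 : Equiv.Perm (Fin 5)) ∈ alternatingGroup (Fin 5) := by
      rw [Equiv.Perm.mem_alternatingGroup]; decide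
    have hb : (Equiv.swap 1 2 * Equiv.swap 3 4 : Equiv.Perm (Fin 5)) ∈ alternatingGroup (Fin 5) := by
      rw [Equiv.Perm.mem_alternatingGroup]; decide
    have hmem : ⁅(⟨_, ha⟩ : ↥(alternatingGroup (Fin 5))), (⟨_, hb⟩ : ↥(alternatingGroup (Fin 5)))⁆
        ∈ commutator (↥(alternatingGroup (Fin 5))) :=
      Subgroup.commutator_mem_commutator (Subgroup.mem_top _) (Subgroup.mem_top _)
    rw [commutator, h, Subgroup.mem_bot, commutatorElement_eq_one_iff_mul_comm] at hmem
    have h2 : (Equiv.swap 0 1 * Equiv.swap 2 3 : Equiv.Perm (Fin 5)) * (Equiv.swap 1 2 * Equiv.swap 3 4)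
        = (Equiv.swap 1 2 * Equiv.swap 3 4) * (Equiv.swap 0 1 * Equiv.swap 2 3) :=
      Subtype.ext_iff.mp hmem
    exact absurd h2 (by decide)
  · exact h

lemma inr_mem_D (σ : ↥(alternatingGroup (Fin 5))) :
    inr σ ∈ ⁅(thetaW B).ker, (thetaW B).ker⁆ := by
  have key : ((inr : ↥(alternatingGroup (Fin 5)) →* WreathA5 B).range : Subgroup (WreathA5 B))
      ≤ ⁅(thetaW B).ker, (thetaW B).ker⁆ := by
    have hrange : (inr : ↥(alternatingGroup (Fin 5)) →* WreathA5 B).range ≤ (thetaW B).ker := by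
      rintro x ⟨τ, rfl⟩; exact inr_mem_ker τ
    calc (inr : ↥(alternatingGroup (Fin 5)) →* WreathA5 B).range
        = Subgroup.map inr ⊤ := inr.range_eq_map
      _ = Subgroup.map inr ⁅(⊤ : Subgroup _), ⊤⁆ := by rw [← commutator_def, commutator_A5]
      _ = ⁅Subgroup.map inr ⊤, Subgroup.map inr ⊤⁆ := Subgroup.map_commutator _ _ _
      _ ≤ ⁅(id (thetaW B).ker : Subgroup ((Fin 5 → B) ⋊[a5Aut B] ↥(alternatingGroup (Fin 5)))), (id (thetaW B).ker : Subgroup ((Fin 5 → B) ⋊[a5Aut B] ↥(alternatingGroup (Fin 5))))⁆ := by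
          apply Subgroup.commutator_mono <;> rw [← inr.range_eq_map] <;> exact hrange
  exact key ⟨σ, rfl⟩

lemma inr_commutator_inl (s : ↥(alternatingGroup (Fin 5))) (n : Fin 5 → B) :
    ⁅(inr s : WreathA5 B), (inl n : WreathA5 B)⁆ = inl (a5Aut B s n * n⁻¹) := by
  simp [commutatorElement_def, map_mul, map_inv, inl_aut, mul_assoc]

lemma Ee_mem_D (i j : Fin 5) (hij : i ≠ j) (b : B) :
    inl (Ee i j b) ∈ ⁅(thetaW B).ker, (thetaW B).ker⁆ := by
  obtain ⟨k, m, hik, hjk, him, hjm, hkm⟩ :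
      ∃ k m : Fin 5, i ≠ k ∧ j ≠ k ∧ i ≠ m ∧ j ≠ m ∧ k ≠ m := by
    revert hij; revert j; revert i; decide
  set σp : Equiv.Perm (Fin 5) := Equiv.swap j m * Equiv.swap j i with hσp
  have hσmem : σp ∈ alternatingGroup (Fin 5) := by
    rw [Equiv.Perm.mem_alternatingGroup, hσp, map_mul,
      Equiv.Perm.sign_swap hjm, Equiv.Perm.sign_swap (Ne.symm hij)]
    decide
  set s : ↥(alternatingGroup (Fin 5)) := ⟨σp, hσmem⟩ with hs
  have hsj : (s : Equiv.Perm (Fin 5)) j = i := by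
    show σp j = i
    rw [hσp, Equiv.Perm.mul_apply, Equiv.swap_apply_left,
      Equiv.swap_apply_of_ne_of_ne hij him]
  have hsk : (s : Equiv.Perm (Fin 5)) k = k := by
    show σp k = k
    rw [hσp, Equiv.Perm.mul_apply,
      Equiv.swap_apply_of_ne_of_ne (Ne.symm hjk) (Ne.symm hik),
      Equiv.swap_apply_of_ne_of_ne (Ne.symm hjk) hkm]
  have key : a5Aut B s (Ee j k b) * (Ee j k b)⁻¹ = Ee i j b := by
    have h1 : a5Aut B s (Ee j k b) = Ee i k b := by
      rw [Ee, map_mul, map_inv, a5Aut_mulSingle, a5Aut_mulSingle, hsj, hsk, Ee]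
    rw [h1, Ee, Ee, Ee]
    group
  have hc := Subgroup.commutator_mem_commutator (inr_mem_ker (B := B) s)
    (inl_Ee_mem_ker j k b)
  exact cast (congrArg (fun x => x ∈ ⁅(thetaW B).ker, (thetaW B).ker⁆)
    ((inr_commutator_inl s (Ee j k b)).trans (congrArg inl key))) hc

lemma single_commutator_eq (i j k : Fin 5) (hij : i ≠ j) (hik : i ≠ k) (hjk : j ≠ k) (g h : B) :
    ⁅Ee i j g, Ee i k h⁆ = Pi.mulSingle i ⁅g, h⁆ := by
  funext x
  simp only [commutatorElement_def, Ee, Pi.mul_apply, Pi.inv_apply]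
  rcases eq_or_ne x i with rfl | hxi
  · simp [Pi.mulSingle_eq_same, Pi.mulSingle_eq_of_ne hij, Pi.mulSingle_eq_of_ne hik]
  · rcases eq_or_ne x j with rfl | hxj
    · simp [Pi.mulSingle_eq_same, Pi.mulSingle_eq_of_ne hxi, Pi.mulSingle_eq_of_ne hjk]
    · rcases eq_or_ne x k with rfl | hxk
      · simp [Pi.mulSingle_eq_same, Pi.mulSingle_eq_of_ne hxi,
          Pi.mulSingle_eq_of_ne (Ne.symm hjk)]
      · simp [Pi.mulSingle_eq_of_ne hxi, Pi.mulSingle_eq_of_ne hxj,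
          Pi.mulSingle_eq_of_ne hxk]

lemma single_mem_D (i : Fin 5) {b : B} (hb : b ∈ commutator B) :
    inl (Pi.mulSingle i b) ∈ ⁅(thetaW B).ker, (thetaW B).ker⁆ := by
  obtain ⟨j, k, hij, hik, hjk⟩ : ∃ j k : Fin 5, i ≠ j ∧ i ≠ k ∧ j ≠ k := by
    revert i; decide
  have hle : commutator B ≤ Subgroup.comap ((inl : (Fin 5 → B) →* WreathA5 B).comp
      (MonoidHom.mulSingle (fun _ : Fin 5 => B) i))
      ((⁅(thetaW B).ker, (thetaW B).ker⁆ : Subgroup (WreathA5 B))) := by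
    rw [commutator, Subgroup.commutator_le]
    intro g _ h _
    refine Subgroup.mem_comap.mpr ?_
    have hc := Subgroup.commutator_mem_commutator (H₁ := (thetaW B).ker)
      (H₂ := (thetaW B).ker) (inl_Ee_mem_ker i j g) (inl_Ee_mem_ker i k h)
    have e2 : ⁅(inl (Ee i j g) : WreathA5 B), (inl (Ee i k h) : WreathA5 B)⁆
        = inl (Pi.mulSingle i ⁅g, h⁆) := by
      rw [← map_commutatorElement, single_commutator_eq i j k hij hik hjk g h]
    exact cast (congrArg (fun x => x ∈ ⁅(thetaW B).ker, (thetaW B).ker⁆) e2) hc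
  exact Subgroup.mem_comap.mp (hle hb)

lemma inl_base_mem_D (f : Fin 5 → B) (hf : (List.ofFn f).prod ∈ commutator B) :
    inl f ∈ ⁅(thetaW B).ker, (thetaW B).ker⁆ := by
  have hprod : (List.ofFn f).prod = f 0 * f 1 * f 2 * f 3 * f 4 := by
    simp only [List.ofFn_succ, List.prod_cons, List.prod_nil, List.ofFn_zero, mul_one, mul_assoc]
    rfl
  have hdecomp : f = Ee 0 1 (f 0) * Ee 1 2 (f 0 * f 1) * Ee 2 3 (f 0 * f 1 * f 2)
      * Ee 3 4 (f 0 * f 1 * f 2 * f 3) * Pi.mulSingle 4 (f 0 * f 1 * f 2 * f 3 * f 4) := by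
    funext x
    fin_cases x <;>
      simp [Ee, Pi.mulSingle, Function.update_apply] <;> group
  rw [hprod] at hf
  have e : inl f = inl (Ee 0 1 (f 0)) * inl (Ee 1 2 (f 0 * f 1)) * inl (Ee 2 3 (f 0 * f 1 * f 2))
      * inl (Ee 3 4 (f 0 * f 1 * f 2 * f 3))
      * (inl (Pi.mulSingle 4 (f 0 * f 1 * f 2 * f 3 * f 4)) : WreathA5 B) := by
    rw [← map_mul, ← map_mul, ← map_mul, ← map_mul, ← hdecomp]
  rw [e]
  refine mul_mem (mul_mem (mul_mem (mul_mem ?_ ?_) ?_) ?_) ?_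
  · exact Ee_mem_D 0 1 (by decide) _
  · exact Ee_mem_D 1 2 (by decide) _
  · exact Ee_mem_D 2 3 (by decide) _
  · exact Ee_mem_D 3 4 (by decide) _
  · exact single_mem_D 4 hf

lemma ker_perfect : ⁅(thetaW B).ker, (thetaW B).ker⁆ = (thetaW B).ker := by
  apply le_antisymm
  · exact Subgroup.commutator_le_right _ _
  · intro w hw
    have hprod : (List.ofFn w.left).prod ∈ commutator B := by
      have h1 : thetaW B w = 1 := hw
      rw [thetaW_eq, prodAb_eq] at h1
      exact (QuotientGroup.eq_one_iff _).mp h1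
    have h1 := inl_base_mem_D w.left hprod
    have h2 := inr_mem_D (B := B) w.right
    have h3 := mul_mem h1 h2
    exact (inl_left_mul_inr_right w) ▸ h3

lemma sup_eq : Ksub B ⊔ (inr : ↥(alternatingGroup (Fin 5)) →* WreathA5 B).range
    = (thetaW B).ker := by
  apply le_antisymm
  · apply sup_le
    · exact inf_le_right
    · rintro x ⟨τ, rfl⟩; exact inr_mem_ker τ
  · intro w hw
    have hinl : inl w.left ∈ Ksub B := by
      refine Subgroup.mem_inf.mpr ⟨?_, ?_⟩
      · show rightHom (inl w.left) = 1
        exact rightHom_inl _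
      · show thetaW B (inl w.left) = 1
        rw [thetaW_inl, ← thetaW_eq]
        exact hw
    have hinr : inr w.right ∈ (inr : ↥(alternatingGroup (Fin 5)) →* WreathA5 B).range :=
      ⟨w.right, rfl⟩
    have h3 := Subgroup.mul_mem_sup hinl hinr
    exact (inl_left_mul_inr_right w) ▸ h3

end Aux

/-- Let `B` be a finite group, `W = B ≀ A₅` the wreath product for the natural action of
`A₅` on `{1,…,5}`, and `K = {f ∈ B⁵ | f(1)f(2)f(3)f(4)f(5) ∈ [B,B]}`.  Then `K ⊴ W`,
the subgroup `K ⋊ A₅` of `W` is perfect, and `B` is a quotient of `K`. -/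
theorem wreath_A5_perfect_subgroup [Finite B] :
    (∀ w : WreathA5 B, w ∈ Ksub B ↔
        (w.right = 1 ∧ (List.ofFn w.left).prod ∈ commutator B)) ∧
    (Ksub B).Normal ∧
    (⁅Ksub B ⊔ (inr : ↥(alternatingGroup (Fin 5)) →* WreathA5 B).range,
       Ksub B ⊔ (inr : ↥(alternatingGroup (Fin 5)) →* WreathA5 B).range⁆
      = Ksub B ⊔ (inr : ↥(alternatingGroup (Fin 5)) →* WreathA5 B).range) ∧
    (∃ ψ : Ksub B →* B, Function.Surjective ψ) := by
  refine ⟨fun w => mem_Ksub w, ?_, ?_, ?_⟩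
  · exact @Subgroup.normal_inf_normal (WreathA5 B) _ _ _ (MonoidHom.normal_ker _) (MonoidHom.normal_ker _)
  · rw [sup_eq]
    exact ker_perfect
  · refine ⟨{ toFun := fun w => (w : WreathA5 B).left 0
              map_one' := rfl
              map_mul' := ?_ }, ?_⟩
    · intro a b
      show ((a : WreathA5 B) * (b : WreathA5 B)).left 0
        = (a : WreathA5 B).left 0 * (b : WreathA5 B).left 0
      erw [mul_left]
      rw [((mem_Ksub (a : WreathA5 B)).mp a.2).1, map_one]
      simp
    · intro b
      refine ⟨⟨inl (Ee 0 1 b), ?_⟩, ?_⟩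
      · refine Subgroup.mem_inf.mpr ⟨?_, inl_Ee_mem_ker 0 1 b⟩
        show rightHom (inl (Ee 0 1 b)) = 1
        exact rightHom_inl _
      · show (inl (Ee 0 1 b) : WreathA5 B).left 0 = b
        show Ee 0 1 b 0 = b
        simp [Ee, Pi.mulSingle_eq_same, Pi.mulSingle_eq_of_ne]
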